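/- Tanh-form of the traveling-wave solution (54) of the generalized Fisher equation. Let m be a real constant with m > 1. Then the function v(t,x) = ( 1/2 − (1/2)·tanh( ((m−1)/(2√(2m+2)))·( x − (m+3)t/√(2m+2) ) ) )^{2/(m−1)} satisfies v_t(t,x) = v_{xx}(t,x) + v(t,x) − v(t,x)^m for all (t,x) ∈ ℝ×ℝ. -/

import Mathlib

open Real Set

/-- Tanh-form of the traveling-wave solution (54) of the generalized Fisher
equation `v_t = v_{xx} + v − v^m`. -/
theorem fisher_tanh_solution
    (m : ℝ) (hm : 1 < m)
    (v : ℝ → ℝ → ℝ)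
    (hv : ∀ t x : ℝ,
      v t x = (1 / 2 - 1 / 2 * Real.tanh ((m - 1) / (2 * Real.sqrt (2 * m + 2))
        * (x - (m + 3) * t / Real.sqrt (2 * m + 2)))) ^ (2 / (m - 1))) :
    ∀ t x : ℝ,
      deriv (fun s => v s x) t
        = deriv (fun y => deriv (fun z => v t z) y) x + v t x - v t x ^ m := by
  have hm1 : m - 1 ≠ 0 := ne_of_gt (by linarith)
  have hm1' : (m:ℝ) + 1 ≠ 0 := by positivity
  have hm2 : (0:ℝ) < 2 * m + 2 := by linarith
  set s : ℝ := Real.sqrt (2 * m + 2) with hs_def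
  have hs : 0 < s := Real.sqrt_pos.2 hm2
  have hs2 : s * s = 2 * m + 2 := Real.mul_self_sqrt hm2.le
  have hsne : s ≠ 0 := ne_of_gt hs
  obtain ⟨p, hp_def⟩ : ∃ p : ℝ, p = 2 / (m - 1) := ⟨_, rfl⟩
  obtain ⟨b, hb_def⟩ : ∃ b : ℝ, b = (m - 1) / s := ⟨_, rfl⟩
  obtain ⟨c, hc_def⟩ : ∃ c : ℝ, c = (m + 3) / s := ⟨_, rfl⟩
  -- tanh identity
  have htanh : ∀ u : ℝ, 1 / 2 - 1 / 2 * Real.tanh u = (1 + Real.exp (2 * u))⁻¹ := by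
    intro u
    rw [Real.tanh_eq_sinh_div_cosh, Real.sinh_eq, Real.cosh_eq]
    have h1 : Real.exp u ≠ 0 := (Real.exp_pos u).ne'
    have h2 : Real.exp u + Real.exp (-u) ≠ 0 := by positivity
    have h3 : (1:ℝ) + Real.exp (2 * u) ≠ 0 := by positivity
    rw [show (2:ℝ) * u = u + u by ring, Real.exp_add, Real.exp_neg]
    field_simp
    ring
  -- rewrite v in exponential form
  have hv' : ∀ t x : ℝ, v t x = (1 + Real.exp (b * x - b * c * t)) ^ (-p) := by
    intro t x
    have hpos : (0:ℝ) < 1 + Real.exp ((m - 1) / (2 * s) * (x - (m + 3) * t / s) * 2) := by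
      positivity
    rw [hv, htanh, Real.inv_rpow (by positivity), ← Real.rpow_neg (by positivity), hp_def]
    congr 2
    rw [hb_def, hc_def]
    ring
  intro t x
  -- basic derivative of the profile
  have hF : ∀ (k z : ℝ), HasDerivAt (fun z => (1 + Real.exp z) ^ k)
      (k * (1 + Real.exp z) ^ (k - 1) * Real.exp z) z := by
    intro k z
    have h1 : HasDerivAt (fun z : ℝ => 1 + Real.exp z) (Real.exp z) z :=
      (Real.hasDerivAt_exp z).const_add 1
    have h2 := h1.rpow_const (p := k) (Or.inl (by positivity))
    convert h2 using 1
    ring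
  have hlinx : ∀ y : ℝ, HasDerivAt (fun z : ℝ => b * z - b * c * t) b y := by
    intro y
    simpa using ((hasDerivAt_id y).const_mul b).sub_const (b * c * t)
  set W : ℝ := Real.exp (b * x - b * c * t) with hW_def
  have hW : 0 < W := Real.exp_pos _
  -- spatial first derivative
  have hvx : ∀ y : ℝ, HasDerivAt (fun z => v t z)
      ((-p) * ((1 + Real.exp (b * y - b * c * t)) ^ (-p - 1)
        * Real.exp (b * y - b * c * t)) * b) y := by
    intro y
    have heq : (fun z => v t z) = fun z => (1 + Real.exp (b * z - b * c * t)) ^ (-p) :=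
      funext fun z => hv' t z
    rw [heq]
    have h := (hF (-p) (b * y - b * c * t)).comp y (hlinx y)
    refine h.congr_deriv ?_
    ring
  have hdx : (fun y => deriv (fun z => v t z) y)
      = fun y => (-p) * ((1 + Real.exp (b * y - b * c * t)) ^ (-p - 1)
        * Real.exp (b * y - b * c * t)) * b :=
    funext fun y => (hvx y).deriv
  -- second spatial derivative
  have hH : ∀ θ : ℝ, HasDerivAt (fun θ => (1 + Real.exp θ) ^ (-p - 1) * Real.exp θ)
      ((-p - 1) * (1 + Real.exp θ) ^ (-p - 2) * Real.exp θ * Real.exp θ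
        + (1 + Real.exp θ) ^ (-p - 1) * Real.exp θ) θ := by
    intro θ
    have h := (hF (-p - 1) θ).mul (Real.hasDerivAt_exp θ)
    refine h.congr_deriv ?_
    rw [show (-p - 1 - 1 : ℝ) = -p - 2 by ring]
  have hvxx : HasDerivAt (fun y => (-p) * ((1 + Real.exp (b * y - b * c * t)) ^ (-p - 1)
        * Real.exp (b * y - b * c * t)) * b)
      ((-p) * (((-p - 1) * (1 + W) ^ (-p - 2) * W * W + (1 + W) ^ (-p - 1) * W) * b) * b) x := by
    exact (((hH (b * x - b * c * t)).comp x (hlinx x)).const_mul (-p)).mul_const b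
  -- time derivative
  have hlint : HasDerivAt (fun s' : ℝ => b * x - b * c * s') (-(b * c)) t := by
    simpa using HasDerivAt.const_sub (b * x) ((hasDerivAt_id t).const_mul (b * c))
  have hvt : HasDerivAt (fun s' => v s' x)
      ((-p) * ((1 + W) ^ (-p - 1) * W) * (-(b * c))) t := by
    have heq : (fun s' => v s' x) = fun s' => (1 + Real.exp (b * x - b * c * s')) ^ (-p) :=
      funext fun s' => hv' s' x
    rw [heq]
    have h := (hF (-p) (b * x - b * c * t)).comp t hlint
    refine h.congr_deriv ?_
    rw [hW_def]
    ring
  -- rewrite the goal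
  rw [hvt.deriv, hdx, hvxx.deriv, hv' t x, ← hW_def]
  -- handle v^m
  have hpm : (-p) * m = -p - 2 := by
    have hpm1 : p * (m - 1) = 2 := by rw [hp_def]; exact div_mul_cancel₀ 2 hm1
    linear_combination -hpm1
  rw [← Real.rpow_mul (by positivity), hpm]
  -- now pure algebra
  have hbc : b * c = ((m - 1) * (m + 3)) / (2 * m + 2) := by
    rw [hb_def, hc_def, div_mul_div_comm, hs2]
  have hbb : b * b = ((m - 1) * (m - 1)) / (2 * m + 2) := by
    rw [hb_def, div_mul_div_comm, hs2]
  set U : ℝ := 1 + W with hU_def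
  have hU : 0 < U := by positivity
  have e1 : U ^ (-p - 1) = U ^ (-p - 2) * U := by
    rw [show -p - 1 = (-p - 2) + 1 by ring, Real.rpow_add hU, Real.rpow_one]
  have e0 : U ^ (-p) = U ^ (-p - 2) * (U * U) := by
    conv_lhs => rw [show (-p : ℝ) = (-p - 2) + 1 + 1 by ring]
    rw [Real.rpow_add hU, Real.rpow_add hU, Real.rpow_one]
    ring
  rw [e1, e0]
  set A : ℝ := U ^ (-p - 2) with hA_def
  rw [hU_def]
  have hA1 : p * (b * c) * (m + 1) = m + 3 := by
    rw [hbc, hp_def]; field_simp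
  have hB1 : p * (b * b) * (m + 1) = m - 1 := by
    rw [hbb, hp_def]; field_simp
  have hC1 : p * (p + 1) * (b * b) = 1 := by
    rw [hbb, hp_def]; field_simp; ring
  have hs2' : s⁻¹ * s⁻¹ * (2 * m + 2) = 1 := by
    rw [← hs2]; field_simp
  apply mul_left_cancel₀ hm1'
  linear_combination (A * W * (1 + W)) * hA1 + (A * W * (1 + W)) * hB1
    - ((m + 1) * A * W * W) * hC1
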